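/- arXiv:2603.06491 — 2 statements merged into one kernel-verified Lean document; each statement's English description precedes it below -/
import Mathlib

section
/- Let φ₁, φ₂ : 𝔻 → 𝔻 be injective holomorphic maps such that F_{φ₁} and F_{φ₂} are square-integrable on 𝔻 × 𝔻. Then F_{φ₁∘φ₂} is square-integrable on 𝔻 × 𝔻 and ‖F_{φ₁∘φ₂}‖_{L²(𝔻×𝔻)} ≤ ‖F_{φ₁}‖_{L²(𝔻×𝔻)} + ‖F_{φ₂}‖_{L²(𝔻×𝔻)}. -/
open MeasureTheory Complex Set
open scoped ENNReal NNReal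

noncomputable section

/-- The open unit disk in ℂ. -/
def unitDisk : Set ℂ := {z : ℂ | ‖z‖ < 1}

/-- The normalized area measure `π⁻¹ · (2-dimensional Lebesgue measure)` on ℂ. -/
def μB : Measure ℂ := (ENNReal.ofReal (Real.pi)⁻¹) • (volume : Measure ℂ)

/-- The cocycle `F_φ(z,w) = φ'(z)φ'(w)/(φ(z) − φ(w))² − 1/(z − w)²`. -/
def Fcocycle (φ : ℂ → ℂ) (z w : ℂ) : ℂ :=
  deriv φ z * deriv φ w / (φ z - φ w) ^ 2 - 1 / (z - w) ^ 2

lemma isOpen_unitDisk : IsOpen unitDisk := by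
  have : unitDisk = Metric.ball (0:ℂ) 1 := by
    ext z; simp [unitDisk, Metric.mem_ball, Complex.dist_eq]
  rw [this]; exact Metric.isOpen_ball

instance : MeasureTheory.Measure.IsAddHaarMeasure μB := by
  unfold μB
  exact Measure.IsAddHaarMeasure.smul _
    (ne_of_gt (ENNReal.ofReal_pos.mpr (by positivity))) ENNReal.ofReal_ne_top

lemma aux_det_mul (c : ℂ) :
    LinearMap.det (((1 : ℂ →L[ℂ] ℂ).smulRight c).restrictScalars ℝ : ℂ →ₗ[ℝ] ℂ)
      = Complex.normSq c := by
  have h : (((1 : ℂ →L[ℂ] ℂ).smulRight c).restrictScalars ℝ : ℂ →ₗ[ℝ] ℂ)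
      = Algebra.lmul ℝ ℂ c := by
    ext z
    simp [mul_comm]
  rw [h, ← Algebra.norm_apply, Algebra.norm_complex_apply]

lemma aux_det_prodMap (f g : ℂ →ₗ[ℝ] ℂ) :
    LinearMap.det (f.prodMap g) = LinearMap.det f * LinearMap.det g := by
  rw [← LinearMap.det_toMatrix (Complex.basisOneI.prod Complex.basisOneI),
    LinearMap.toMatrix_prodMap, Matrix.det_fromBlocks_zero₁₂,
    LinearMap.det_toMatrix, LinearMap.det_toMatrix]

lemma aux_nnnorm_sq (c₁ c₂ F : ℂ) :
    ENNReal.ofReal |Complex.normSq c₁ * Complex.normSq c₂| * (‖F‖₊ : ℝ≥0∞) ^ 2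
      = (‖c₁ * c₂ * F‖₊ : ℝ≥0∞) ^ 2 := by
  rw [_root_.abs_of_nonneg (mul_nonneg (Complex.normSq_nonneg _) (Complex.normSq_nonneg _))]
  rw [ENNReal.ofReal_mul (Complex.normSq_nonneg _)]
  have h : ∀ c : ℂ, ENNReal.ofReal (Complex.normSq c) = (‖c‖₊ : ℝ≥0∞) ^ 2 := by
    intro c
    rw [← Complex.sq_norm, ENNReal.ofReal_pow (norm_nonneg _),
      ofReal_norm_eq_enorm, enorm_eq_nnnorm]
  rw [h, h]
  push_cast [nnnorm_mul]
  ring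

lemma aux_elp2 {ν : Measure (ℂ × ℂ)} (F : ℂ × ℂ → ℂ) :
    eLpNorm F 2 ν = (∫⁻ p, (‖F p‖₊ : ℝ≥0∞) ^ 2 ∂ν) ^ (1/2 : ℝ) := by
  rw [eLpNorm_eq_lintegral_rpow_enorm_toReal two_ne_zero ENNReal.ofNat_ne_top]
  congr 1
  · congr 1
    ext p
    rw [ENNReal.toReal_ofNat, ← ENNReal.rpow_natCast, enorm_eq_nnnorm]
    norm_num

/-- If `F_{φ₁}` and `F_{φ₂}` are square-integrable on `𝔻 × 𝔻`, then so is
`F_{φ₁∘φ₂}` and `‖F_{φ₁∘φ₂}‖_{L²} ≤ ‖F_{φ₁}‖_{L²} + ‖F_{φ₂}‖_{L²}`. -/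
theorem statement_9 (φ₁ φ₂ : ℂ → ℂ)
    (h₁m : Set.MapsTo φ₁ unitDisk unitDisk)
    (h₁d : DifferentiableOn ℂ φ₁ unitDisk)
    (h₁i : Set.InjOn φ₁ unitDisk)
    (h₂m : Set.MapsTo φ₂ unitDisk unitDisk)
    (h₂d : DifferentiableOn ℂ φ₂ unitDisk)
    (h₂i : Set.InjOn φ₂ unitDisk)
    (h₁sq : IntegrableOn (fun p : ℂ × ℂ => ‖Fcocycle φ₁ p.1 p.2‖ ^ 2)
      (unitDisk ×ˢ unitDisk) (μB.prod μB))
    (h₂sq : IntegrableOn (fun p : ℂ × ℂ => ‖Fcocycle φ₂ p.1 p.2‖ ^ 2)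
      (unitDisk ×ˢ unitDisk) (μB.prod μB)) :
    IntegrableOn (fun p : ℂ × ℂ => ‖Fcocycle (φ₁ ∘ φ₂) p.1 p.2‖ ^ 2)
        (unitDisk ×ˢ unitDisk) (μB.prod μB) ∧
    Real.sqrt (∫ p in unitDisk ×ˢ unitDisk, ‖Fcocycle (φ₁ ∘ φ₂) p.1 p.2‖ ^ 2 ∂(μB.prod μB))
      ≤ Real.sqrt (∫ p in unitDisk ×ˢ unitDisk, ‖Fcocycle φ₁ p.1 p.2‖ ^ 2 ∂(μB.prod μB))
        + Real.sqrt (∫ p in unitDisk ×ˢ unitDisk, ‖Fcocycle φ₂ p.1 p.2‖ ^ 2 ∂(μB.prod μB)) := by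
  classical
  have hUopen : IsOpen unitDisk := isOpen_unitDisk
  have hUmeas : MeasurableSet unitDisk := hUopen.measurableSet
  set S : Set (ℂ × ℂ) := unitDisk ×ˢ unitDisk with hSdef
  have hSmeas : MeasurableSet S := hUmeas.prod hUmeas
  set ν : Measure (ℂ × ℂ) := (μB.prod μB).restrict S with hνdef
  -- differentiability at points
  have hda2 : ∀ z ∈ unitDisk, DifferentiableAt ℂ φ₂ z := fun z hz =>
    h₂d.differentiableAt (hUopen.mem_nhds hz)
  have hda1 : ∀ z ∈ unitDisk, DifferentiableAt ℂ φ₁ z := fun z hz =>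
    h₁d.differentiableAt (hUopen.mem_nhds hz)
  -- abbreviations
  set F₁ : ℂ × ℂ → ℂ := fun p => Fcocycle φ₁ p.1 p.2 with hF₁def
  set F₂ : ℂ × ℂ → ℂ := fun p => Fcocycle φ₂ p.1 p.2 with hF₂def
  set f : ℂ × ℂ → ℂ := fun p => Fcocycle (φ₁ ∘ φ₂) p.1 p.2 with hfdef
  set g : ℂ × ℂ → ℂ :=
    fun p => deriv φ₂ p.1 * deriv φ₂ p.2 * Fcocycle φ₁ (φ₂ p.1) (φ₂ p.2) with hgdef
  -- pointwise identity
  have key : ∀ p ∈ S, f p = g p + F₂ p := by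
    rintro ⟨z, w⟩ ⟨hz, hw⟩
    simp only [hfdef, hgdef, hF₂def, Fcocycle, Function.comp_apply]
    rw [deriv_comp z (hda1 _ (h₂m hz)) (hda2 z hz),
      deriv_comp w (hda1 _ (h₂m hw)) (hda2 w hw)]
    ring
  have hae : f =ᵐ[ν] fun p => g p + F₂ p := by
    filter_upwards [self_mem_ae_restrict hSmeas] with p hp using key p hp
  -- measurability
  have mc2 : ContinuousOn φ₂ unitDisk := h₂d.continuousOn
  have mc1 : ContinuousOn φ₁ unitDisk := h₁d.continuousOn
  have mc12 : ContinuousOn (φ₁ ∘ φ₂) unitDisk := mc1.comp mc2 h₂m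
  have aem : ∀ ψ : ℂ → ℂ, ContinuousOn ψ unitDisk →
      AEMeasurable (fun p : ℂ × ℂ => ψ p.1) ν ∧ AEMeasurable (fun p : ℂ × ℂ => ψ p.2) ν := by
    intro ψ hψ
    constructor
    · exact (hψ.comp continuous_fst.continuousOn (fun p (hp : p ∈ S) => hp.1)).aemeasurable hSmeas
    · exact (hψ.comp continuous_snd.continuousOn (fun p (hp : p ∈ S) => hp.2)).aemeasurable hSmeas
  have aesmF : ∀ ψ : ℂ → ℂ, ContinuousOn ψ unitDisk →
      AEStronglyMeasurable (fun p : ℂ × ℂ => Fcocycle ψ p.1 p.2) ν := by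
    intro ψ hψ
    apply AEMeasurable.aestronglyMeasurable
    refine AEMeasurable.sub (AEMeasurable.div ?_ ?_) (AEMeasurable.div aemeasurable_const ?_)
    · exact ((measurable_deriv ψ).comp measurable_fst).aemeasurable.mul
        ((measurable_deriv ψ).comp measurable_snd).aemeasurable
    · exact ((aem ψ hψ).1.sub (aem ψ hψ).2).pow_const 2
    · exact ((measurable_fst.sub measurable_snd).pow_const 2).aemeasurable
  have hF1sm : AEStronglyMeasurable F₁ ν := aesmF φ₁ mc1
  have hF2sm : AEStronglyMeasurable F₂ ν := aesmF φ₂ mc2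
  have hfsm : AEStronglyMeasurable f ν := aesmF (φ₁ ∘ φ₂) mc12
  have hgsm : AEStronglyMeasurable g ν := by
    apply AEMeasurable.aestronglyMeasurable
    have a1 : AEMeasurable (fun p : ℂ × ℂ => Fcocycle φ₁ (φ₂ p.1) (φ₂ p.2)) ν := by
      refine AEMeasurable.sub (AEMeasurable.div ?_ ?_) (AEMeasurable.div aemeasurable_const ?_)
      · exact ((measurable_deriv φ₁).comp_aemeasurable (aem φ₂ mc2).1).mul
          ((measurable_deriv φ₁).comp_aemeasurable (aem φ₂ mc2).2)
      · exact ((aem (φ₁ ∘ φ₂) mc12).1.sub (aem (φ₁ ∘ φ₂) mc12).2).pow_const 2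
      · exact ((aem φ₂ mc2).1.sub (aem φ₂ mc2).2).pow_const 2
    exact (((measurable_deriv φ₂).comp measurable_fst).aemeasurable.mul
      ((measurable_deriv φ₂).comp measurable_snd).aemeasurable).mul a1
  -- Memℒp from hypotheses
  have hm1 : MemLp F₁ 2 ν := (memLp_two_iff_integrable_sq_norm hF1sm).mpr h₁sq
  have hm2 : MemLp F₂ 2 ν := (memLp_two_iff_integrable_sq_norm hF2sm).mpr h₂sq
  -- change of variables
  set A : ℂ → (ℂ →L[ℝ] ℂ) :=
    fun z => ((1 : ℂ →L[ℂ] ℂ).smulRight (deriv φ₂ z)).restrictScalars ℝ with hAdef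
  set D : ℂ × ℂ → ((ℂ × ℂ) →L[ℝ] (ℂ × ℂ)) := fun p => (A p.1).prodMap (A p.2) with hDdef
  have hder : ∀ p ∈ S, HasFDerivWithinAt (Prod.map φ₂ φ₂) (D p) S p := by
    rintro ⟨z, w⟩ ⟨hz, hw⟩
    have h1 : HasFDerivAt φ₂ (A z) z :=
      ((hda2 z hz).hasDerivAt.hasFDerivAt).restrictScalars ℝ
    have h2 : HasFDerivAt φ₂ (A w) w :=
      ((hda2 w hw).hasDerivAt.hasFDerivAt).restrictScalars ℝ
    exact (h1.prodMap (z, w) h2).hasFDerivWithinAt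
  have hinj : InjOn (Prod.map φ₂ φ₂) S := by
    rintro ⟨z, w⟩ ⟨hz, hw⟩ ⟨z', w'⟩ ⟨hz', hw'⟩ hq
    have h1 := congrArg Prod.fst hq
    have h2 := congrArg Prod.snd hq
    exact Prod.ext (h₂i hz hz' h1) (h₂i hw hw' h2)
  have hdet : ∀ p : ℂ × ℂ, (D p).det
      = Complex.normSq (deriv φ₂ p.1) * Complex.normSq (deriv φ₂ p.2) := by
    intro p
    show LinearMap.det _ = _
    rw [ContinuousLinearMap.coe_prodMap, aux_det_prodMap, hAdef]
    rw [aux_det_mul, aux_det_mul]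
  have hcov := lintegral_image_eq_lintegral_abs_det_fderiv_mul (μB.prod μB) hSmeas hder hinj
    (fun p => (‖F₁ p‖₊ : ℝ≥0∞) ^ 2)
  have himg : Prod.map φ₂ φ₂ '' S ⊆ S := by
    rintro q ⟨p, hp, rfl⟩
    exact ⟨h₂m hp.1, h₂m hp.2⟩
  have core : ∫⁻ p, (‖g p‖₊ : ℝ≥0∞) ^ 2 ∂ν ≤ ∫⁻ p, (‖F₁ p‖₊ : ℝ≥0∞) ^ 2 ∂ν := by
    rw [hνdef]
    calc ∫⁻ p in S, (‖g p‖₊ : ℝ≥0∞) ^ 2 ∂(μB.prod μB)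
        = ∫⁻ p in S, ENNReal.ofReal |(D p).det| * (‖F₁ (Prod.map φ₂ φ₂ p)‖₊ : ℝ≥0∞) ^ 2
            ∂(μB.prod μB) := by
          apply lintegral_congr
          intro p
          rw [hdet p]
          exact (aux_nnnorm_sq _ _ _).symm
      _ = ∫⁻ p in Prod.map φ₂ φ₂ '' S, (‖F₁ p‖₊ : ℝ≥0∞) ^ 2 ∂(μB.prod μB) := hcov.symm
      _ ≤ ∫⁻ p in S, (‖F₁ p‖₊ : ℝ≥0∞) ^ 2 ∂(μB.prod μB) := lintegral_mono_set himg
  have hgle : eLpNorm g 2 ν ≤ eLpNorm F₁ 2 ν := by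
    rw [aux_elp2, aux_elp2]
    exact ENNReal.rpow_le_rpow core (by norm_num)
  have hmg : MemLp g 2 ν := ⟨hgsm, lt_of_le_of_lt hgle hm1.2⟩
  have hmf : MemLp f 2 ν := (hmg.add hm2).ae_eq hae.symm
  have hint : IntegrableOn (fun p : ℂ × ℂ => ‖f p‖ ^ 2) S (μB.prod μB) :=
    (memLp_two_iff_integrable_sq_norm hfsm).mp hmf
  refine ⟨hint, ?_⟩
  -- triangle inequality
  have tri : eLpNorm f 2 ν ≤ eLpNorm F₁ 2 ν + eLpNorm F₂ 2 ν :=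
    calc eLpNorm f 2 ν = eLpNorm (fun p => g p + F₂ p) 2 ν := eLpNorm_congr_ae hae
      _ ≤ eLpNorm g 2 ν + eLpNorm F₂ 2 ν := eLpNorm_add_le hgsm hF2sm one_le_two
      _ ≤ eLpNorm F₁ 2 ν + eLpNorm F₂ 2 ν := add_le_add_left hgle _
  have hsq : ∀ F : ℂ × ℂ → ℂ, MemLp F 2 ν →
      (eLpNorm F 2 ν).toReal = Real.sqrt (∫ p, ‖F p‖ ^ 2 ∂ν) := by
    intro F hF
    rw [hF.eLpNorm_eq_integral_rpow_norm two_ne_zero ENNReal.ofNat_ne_top]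
    have hnn : (0:ℝ) ≤ ∫ p, ‖F p‖ ^ (2:ℝ≥0∞).toReal ∂ν :=
      integral_nonneg fun p => Real.rpow_nonneg (norm_nonneg _) _
    rw [ENNReal.toReal_ofReal (Real.rpow_nonneg hnn _)]
    rw [Real.sqrt_eq_rpow]
    norm_num [ENNReal.toReal_ofNat]
  calc Real.sqrt (∫ p, ‖f p‖ ^ 2 ∂ν) = (eLpNorm f 2 ν).toReal := (hsq f hmf).symm
    _ ≤ (eLpNorm F₁ 2 ν + eLpNorm F₂ 2 ν).toReal := by
        apply ENNReal.toReal_mono _ tri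
        exact ENNReal.add_ne_top.mpr ⟨hm1.2.ne, hm2.2.ne⟩
    _ = (eLpNorm F₁ 2 ν).toReal + (eLpNorm F₂ 2 ν).toReal :=
        ENNReal.toReal_add hm1.2.ne hm2.2.ne
    _ = _ := by rw [hsq F₁ hm1, hsq F₂ hm2]
end
end

section
/- Let ζ ∈ ℂ and r, s > 0 satisfy r + |ζ| ≤ 1, s ≤ 1, and r + s < |ζ|. Then for all n, m ∈ ℕ, ∫∫_{𝔻×𝔻} [r·s/((r·conj(z) + ζ) − s·conj(w))²]·(n+1)·zⁿ·(m+1)·wᵐ dμ(z) dμ(w) = (−1)ⁿ · r^{n+1} · s^{m+1} · (n+m+1)!/(n!·m!) · ζ^{−n−m−2}. -/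
open MeasureTheory Complex Set

noncomputable section

instance : SFinite μB :=
  inferInstanceAs (SFinite ((ENNReal.ofReal (Real.pi)⁻¹) • (volume : Measure ℂ)))

lemma unitDisk_eq : unitDisk = Metric.ball (0:ℂ) 1 := by
  ext z; simp [unitDisk, Complex.dist_eq]

lemma measurableSet_unitDisk : MeasurableSet unitDisk := by
  rw [unitDisk_eq]; exact Metric.isOpen_ball.measurableSet

lemma μB_unitDisk : μB unitDisk = 1 := by
  rw [unitDisk_eq, μB]
  simp only [Measure.smul_apply, Complex.volume_ball, smul_eq_mul]
  rw [ENNReal.ofReal_one, one_pow, one_mul]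
  rw [← ENNReal.ofReal_coe_nnreal, NNReal.coe_real_pi,
    ← ENNReal.ofReal_mul (by positivity)]
  rw [inv_mul_cancel₀ Real.pi_ne_zero, ENNReal.ofReal_one]

lemma polar_pointwise (n k : ℕ) (p : ℝ × ℝ) (hp : p ∈ Set.Ioi (0:ℝ) ×ˢ Set.Ioo (-Real.pi) Real.pi) :
    p.1 • Set.indicator unitDisk (fun z => z ^ n * (starRingEnd ℂ) z ^ k)
        (Complex.polarCoord.symm p)
      = (Set.indicator (Set.Ioo (0:ℝ) 1) (fun ρ => (ρ:ℂ) ^ (n+k+1)) p.1)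
          * Complex.exp (((n:ℂ) - (k:ℂ)) * p.2 * Complex.I) := by
  obtain ⟨ρ, θ⟩ := p
  obtain ⟨hρ, hθ⟩ := hp
  simp only at *
  have hz : Complex.polarCoord.symm (ρ, θ) = (ρ:ℂ) * Complex.exp (θ * Complex.I) := by
    rw [Complex.polarCoord_symm_apply, Complex.exp_mul_I]
    simp [Complex.ofReal_cos, Complex.ofReal_sin]
  by_cases h1 : ρ < 1
  · rw [Set.indicator_of_mem (by
        simp only [unitDisk, Set.mem_setOf_eq, hz, norm_mul, Complex.norm_real, Real.norm_eq_abs,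
          Complex.norm_exp_ofReal_mul_I, mul_one]
        rwa [abs_of_pos hρ]),
      Set.indicator_of_mem (Set.mem_Ioo.mpr ⟨hρ, h1⟩), hz]
    have hc : (starRingEnd ℂ) (Complex.exp (θ * Complex.I)) = Complex.exp (-(θ * Complex.I)) := by
      rw [← Complex.exp_conj]; congr 1; simp
    rw [map_mul, Complex.conj_ofReal, hc, Complex.real_smul]
    calc (ρ:ℂ) * (((ρ:ℂ) * Complex.exp (θ * Complex.I)) ^ n
          * ((ρ:ℂ) * Complex.exp (-(θ * Complex.I))) ^ k)
        = (ρ:ℂ) ^ (n+k+1) * (Complex.exp (θ * Complex.I) ^ n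
            * Complex.exp (-(θ * Complex.I)) ^ k) := by ring
      _ = (ρ:ℂ) ^ (n+k+1) * Complex.exp (((n:ℂ) - (k:ℂ)) * θ * Complex.I) := by
          rw [← Complex.exp_nat_mul, ← Complex.exp_nat_mul, ← Complex.exp_add]
          congr 1
          ring
  · rw [Set.indicator_of_notMem (by
        simp only [unitDisk, Set.mem_setOf_eq, hz, norm_mul, Complex.norm_real, Real.norm_eq_abs,
          Complex.norm_exp_ofReal_mul_I, mul_one, not_lt]
        rw [abs_of_pos hρ]; exact le_of_not_gt h1),
      Set.indicator_of_notMem (by simp [h1]), zero_mul, smul_zero]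

/-- moment integral -/
lemma moment (n k : ℕ) :
    ∫ z in unitDisk, z ^ n * (starRingEnd ℂ) z ^ k ∂μB
      = if n = k then 1 / ((n : ℂ) + 1) else 0 := by
  have h1 : ∫ z in unitDisk, z ^ n * (starRingEnd ℂ) z ^ k ∂μB
      = (Real.pi)⁻¹ • ∫ z in unitDisk, z ^ n * (starRingEnd ℂ) z ^ k ∂(volume : Measure ℂ) := by
    rw [μB, Measure.restrict_smul, integral_smul_measure]
    congr 1
    rw [ENNReal.toReal_ofReal (by positivity)]
  rw [h1, ← integral_indicator measurableSet_unitDisk,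
    ← Complex.integral_comp_polarCoord_symm,
    show polarCoord.target = Set.Ioi (0:ℝ) ×ˢ Set.Ioo (-Real.pi) Real.pi from rfl]
  rw [setIntegral_congr_fun (measurableSet_Ioi.prod measurableSet_Ioo)
    (fun p hp => polar_pointwise n k p hp)]
  rw [Measure.volume_eq_prod,
    setIntegral_prod_mul (fun ρ : ℝ => Set.indicator (Set.Ioo (0:ℝ) 1) (fun ρ => (ρ:ℂ) ^ (n+k+1)) ρ)
      (fun θ : ℝ => Complex.exp (((n:ℂ) - (k:ℂ)) * (θ:ℂ) * Complex.I))
      (Set.Ioi (0:ℝ)) (Set.Ioo (-Real.pi) Real.pi)]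
  have hρint : ∫ ρ in Set.Ioi (0:ℝ),
      Set.indicator (Set.Ioo (0:ℝ) 1) (fun ρ => (ρ:ℂ) ^ (n+k+1)) ρ
      = 1 / ((n:ℂ) + (k:ℂ) + 2) := by
    rw [setIntegral_indicator measurableSet_Ioo,
      Set.inter_eq_self_of_subset_right Set.Ioo_subset_Ioi_self,
      ← integral_Ioc_eq_integral_Ioo, ← intervalIntegral.integral_of_le zero_le_one]
    have : ∀ x : ℝ, ((x:ℂ)) ^ (n+k+1) = ((x ^ (n+k+1) : ℝ) : ℂ) := fun x => by push_cast; ring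
    simp_rw [this]
    rw [intervalIntegral.integral_ofReal, integral_pow]
    push_cast
    norm_num
    ring
  rw [hρint]
  by_cases hnk : n = k
  · subst hnk
    simp only [sub_self, zero_mul, Complex.exp_zero, if_pos rfl]
    rw [setIntegral_const, Real.volume_real_Ioo_of_le (by linarith [Real.pi_pos] : -Real.pi ≤ Real.pi),
      Complex.real_smul, Complex.real_smul, mul_one]
    have h2 : ((n:ℂ) + n + 2) ≠ 0 := by
      have : ((n:ℂ) + n + 2) = ((2*n+2 : ℕ) : ℂ) := by push_cast; ring
      rw [this]
      exact Nat.cast_ne_zero.mpr (by omega)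
    rw [if_pos trivial]
    have hπ : (Real.pi : ℂ) ≠ 0 := Complex.ofReal_ne_zero.mpr Real.pi_ne_zero
    have h3 : (1 + (n:ℂ)) ≠ 0 := by
      have : (1 + (n:ℂ)) = ((n+1 : ℕ) : ℂ) := by push_cast; ring
      rw [this]; exact Nat.cast_ne_zero.mpr (by omega)
    push_cast
    field_simp
    rw [div_eq_iff (by rw [show (n:ℂ) * (1 + 1) + 2 = (n:ℂ) + n + 2 by ring]; exact h2)]
    ring
  · have hθ : ∫ θ in Set.Ioo (-Real.pi) Real.pi,
        Complex.exp (((n:ℂ) - (k:ℂ)) * (θ:ℂ) * Complex.I) = 0 := by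
      have hd : ((n:ℂ) - (k:ℂ)) * Complex.I ≠ 0 := by
        apply mul_ne_zero _ Complex.I_ne_zero
        intro h; exact hnk (by exact_mod_cast sub_eq_zero.mp h)
      rw [← integral_Ioc_eq_integral_Ioo,
        ← intervalIntegral.integral_of_le (by linarith [Real.pi_pos])]
      have harg : ∀ θ : ℝ, ((n:ℂ) - (k:ℂ)) * (θ:ℂ) * Complex.I
          = (((n:ℂ) - (k:ℂ)) * Complex.I) * (θ:ℂ) := fun θ => by ring
      simp_rw [harg]
      rw [integral_exp_mul_complex hd]
      have he : Complex.exp ((((n:ℂ) - (k:ℂ)) * Complex.I) * ((-Real.pi : ℝ) : ℂ))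
          = Complex.exp ((((n:ℂ) - (k:ℂ)) * Complex.I) * ((Real.pi : ℝ) : ℂ)) := by
        have hnk2 : (((n:ℂ) - (k:ℂ)) * Complex.I) * ((-Real.pi : ℝ) : ℂ)
            = (((n:ℂ) - (k:ℂ)) * Complex.I) * ((Real.pi : ℝ) : ℂ)
              - (((n:ℤ) - (k:ℤ) : ℤ) : ℂ) * (2 * (Real.pi : ℂ) * Complex.I) := by
          push_cast; ring
        rw [hnk2, Complex.exp_sub, Complex.exp_int_mul_two_pi_mul_I, div_one]
      rw [he, sub_self, zero_div]
    rw [hθ, mul_zero, smul_zero, if_neg hnk]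


lemma integralB {b c : ℂ} (h : ‖c‖ < ‖b‖) (j n : ℕ) :
    ∫ z in unitDisk, ((n:ℂ) + 1) * z ^ n / (b - c * (starRingEnd ℂ) z) ^ (j+1) ∂μB
      = (Nat.choose (n+j) j : ℂ) * c ^ n / b ^ (n+j+1) := by
  have hb : b ≠ 0 := by
    intro h0
    rw [h0, norm_zero] at h
    exact absurd h (not_lt.mpr (norm_nonneg c))
  set q : ℂ := c / b with hqdef
  have hq : ‖q‖ < 1 := by
    rw [hqdef, norm_div, div_lt_one (lt_of_le_of_lt (norm_nonneg c) h)]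
    exact h
  set F : ℕ → ℂ → ℂ := fun k z =>
    ((n:ℂ) + 1) * z ^ n / b ^ (j+1)
      * ((Nat.choose (k+j) j : ℂ) * (q * (starRingEnd ℂ) z) ^ k) with hF
  have hfin : IsFiniteMeasure (μB.restrict unitDisk) := by
    constructor
    rw [Measure.restrict_apply_univ, μB_unitDisk]
    exact ENNReal.one_lt_top
  -- pointwise HasSum
  have hsum : ∀ z ∈ unitDisk, HasSum (fun k => F k z)
      (((n:ℂ) + 1) * z ^ n / (b - c * (starRingEnd ℂ) z) ^ (j+1)) := by
    intro z hz
    have hz1 : ‖z‖ < 1 := hz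
    have hnorm : ‖q * (starRingEnd ℂ) z‖ < 1 := by
      rw [norm_mul, Complex.norm_conj]
      calc ‖q‖ * ‖z‖ ≤ ‖q‖ * 1 := by
            apply mul_le_mul_of_nonneg_left (le_of_lt hz1) (norm_nonneg q)
        _ < 1 := by rwa [mul_one]
    have H := (hasSum_choose_mul_geometric_of_norm_lt_one j hnorm).mul_left
      (((n:ℂ) + 1) * z ^ n / b ^ (j+1))
    have hne : (1 : ℂ) - q * (starRingEnd ℂ) z ≠ 0 := by
      intro h0
      have h01 : q * (starRingEnd ℂ) z = 1 := by linear_combination -h0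
      rw [h01, norm_one] at hnorm
      exact lt_irrefl 1 hnorm
    have hfactor : b - c * (starRingEnd ℂ) z = b * (1 - q * (starRingEnd ℂ) z) := by
      rw [hqdef]; field_simp
    have hval : ((n:ℂ) + 1) * z ^ n / b ^ (j+1) * (1 / (1 - q * (starRingEnd ℂ) z) ^ (j+1))
        = ((n:ℂ) + 1) * z ^ n / (b - c * (starRingEnd ℂ) z) ^ (j+1) := by
      rw [hfactor, mul_pow]
      rw [div_mul_eq_mul_div, mul_one_div, div_div]
      ring_nf
    exact hval ▸ H
  -- integrability of each F k
  have hconj : Continuous fun z : ℂ => (starRingEnd ℂ) z := continuous_star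
  have hcont : ∀ k, Continuous (F k) := by
    intro k
    rw [hF]
    exact (((continuous_const.mul (continuous_pow n)).div_const _).mul
      (continuous_const.mul ((continuous_const.mul hconj).pow k)))
  set D : ℕ → ℝ := fun k =>
    ((n:ℝ) + 1) * (Nat.choose (k+j) j : ℝ) * (‖q‖) ^ k / (‖b‖) ^ (j+1)
    with hD
  have hbound : ∀ k, ∀ z ∈ unitDisk, ‖F k z‖ ≤ D k := by
    intro k z hz
    have hz1 : ‖z‖ ≤ 1 := le_of_lt hz
    have habs1 : ‖(n:ℂ) + 1‖ = (n:ℝ) + 1 := by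
      rw [show ((n:ℂ) + 1) = ((n+1 : ℕ) : ℂ) by push_cast; ring, Complex.norm_natCast]
      push_cast; ring
    have habs2 : ‖(Nat.choose (k+j) j : ℂ)‖ = (Nat.choose (k+j) j : ℝ) :=
      Complex.norm_natCast _
    have hthis : ‖F k z‖ = ((n:ℝ) + 1) * (‖z‖) ^ n / (‖b‖) ^ (j+1)
        * ((Nat.choose (k+j) j : ℝ) * ((‖q‖) * ‖z‖) ^ k) := by
      simp only [hF, norm_mul, norm_div, norm_pow, Complex.norm_conj,
        habs1, habs2]
    calc ‖F k z‖
        = ((n:ℝ) + 1) * (‖z‖) ^ n / (‖b‖) ^ (j+1)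
            * ((Nat.choose (k+j) j : ℝ) * ((‖q‖) * ‖z‖) ^ k) := hthis
      _ ≤ ((n:ℝ) + 1) * 1 ^ n / (‖b‖) ^ (j+1)
            * ((Nat.choose (k+j) j : ℝ) * ((‖q‖) * 1) ^ k) := by
          gcongr <;> first | exact norm_nonneg z | exact hz1
      _ = D k := by
          rw [hD]
          norm_num
          ring
  have hint : ∀ k, Integrable (F k) (μB.restrict unitDisk) := by
    intro k
    apply Integrable.mono' (integrable_const (D k)) ((hcont k).aestronglyMeasurable)
    rw [ae_restrict_iff' measurableSet_unitDisk]
    exact Filter.Eventually.of_forall (fun z hz => hbound k z hz)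
  have hDsum : Summable D := by
    have h1 : Summable (fun k : ℕ => (Nat.choose (k+j) j : ℝ) * (‖q‖) ^ k) := by
      apply summable_choose_mul_geometric_of_norm_lt_one
      rwa [Real.norm_eq_abs, _root_.abs_of_nonneg (norm_nonneg q)]
    have := h1.mul_left (((n:ℝ) + 1) / (‖b‖) ^ (j+1))
    apply this.congr
    intro k
    rw [hD]
    ring
  have hnormint : Summable (fun k => ∫ z in unitDisk, ‖F k z‖ ∂μB) := by
    apply Summable.of_nonneg_of_le (fun k => integral_nonneg (fun z => norm_nonneg _)) _ hDsum
    intro k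
    calc ∫ z in unitDisk, ‖F k z‖ ∂μB ≤ ∫ _ in unitDisk, D k ∂μB := by
          apply integral_mono_ae (hint k).norm (integrable_const _)
          exact (ae_restrict_iff' measurableSet_unitDisk).mpr
            (Filter.Eventually.of_forall (fun z hz => hbound k z hz))
      _ = D k := by
          rw [setIntegral_const, Measure.real, μB_unitDisk, ENNReal.toReal_one, one_smul]
  -- main computation
  rw [setIntegral_congr_fun measurableSet_unitDisk
    (fun z hz => ((hsum z hz).tsum_eq).symm : EqOn _ _ unitDisk)]
  rw [← integral_tsum_of_summable_integral_norm hint hnormint]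
  have h4 : ∀ k, ∫ z in unitDisk, F k z ∂μB
      = (((n:ℂ) + 1) * (Nat.choose (k+j) j : ℂ) * q ^ k / b ^ (j+1))
          * (if n = k then 1 / ((n:ℂ) + 1) else 0) := by
    intro k
    have : F k = fun z => (((n:ℂ) + 1) * (Nat.choose (k+j) j : ℂ) * q ^ k / b ^ (j+1))
        * (z ^ n * (starRingEnd ℂ) z ^ k) := by
      funext z
      rw [hF]
      simp only [mul_pow]
      ring
    rw [this, integral_const_mul, moment n k]
  simp_rw [h4]
  rw [tsum_eq_single n]
  · rw [if_pos rfl]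
    have hn1 : ((n:ℂ) + 1) ≠ 0 := by
      have : ((n:ℂ) + 1) = ((n+1 : ℕ) : ℂ) := by push_cast; ring
      rw [this]; exact Nat.cast_ne_zero.mpr (by omega)
    have step1 : ((n:ℂ) + 1) * (Nat.choose (n+j) j : ℂ) * q ^ n / b ^ (j+1) * (1 / ((n:ℂ) + 1))
        = (Nat.choose (n+j) j : ℂ) * q ^ n / b ^ (j+1) := by
      field_simp
    rw [step1, hqdef, div_pow, show n+j+1 = n+(j+1) from by omega, pow_add]
    field_simp
    ring_nf
  · intro k hk
    rw [if_neg (fun h => hk h.symm), mul_zero]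


/-- For `r, s > 0` with `r + |ζ| ≤ 1`, `s ≤ 1`, `r + s < |ζ|`, and all `n, m ∈ ℕ`:
`∫∫_{𝔻×𝔻} [rs/((r·conj z + ζ) − s·conj w)²]·(n+1)zⁿ·(m+1)wᵐ dμ dμ
  = (−1)ⁿ r^{n+1} s^{m+1} (n+m+1)!/(n!m!) ζ^{−n−m−2}`. -/
theorem statement_19 (ζ : ℂ) (r s : ℝ) (hr : 0 < r) (hs : 0 < s)
    (hrζ : r + ‖ζ‖ ≤ 1) (hs1 : s ≤ 1)
    (hsep : r + s < ‖ζ‖) :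
    ∀ n m : ℕ,
      ∫ p in unitDisk ×ˢ unitDisk,
          (((r : ℂ) * (s : ℂ)) /
              (((r : ℂ) * (starRingEnd ℂ) p.1 + ζ) - (s : ℂ) * (starRingEnd ℂ) p.2) ^ 2)
            * (((n : ℂ) + 1) * p.1 ^ n) * (((m : ℂ) + 1) * p.2 ^ m) ∂(μB.prod μB)
        = (-1 : ℂ) ^ n * (r : ℂ) ^ (n + 1) * (s : ℂ) ^ (m + 1)
            * ((Nat.factorial (n + m + 1) : ℂ) / ((Nat.factorial n : ℂ) * (Nat.factorial m : ℂ)))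
            * ζ ^ (-(n : ℤ) - (m : ℤ) - 2) := by
  intro n m
  set ε : ℝ := ‖ζ‖ - r - s with hε
  have hεpos : 0 < ε := by simp only [hε]; linarith
  have hζ0 : ζ ≠ 0 := by
    intro h0; rw [h0, norm_zero] at hsep; linarith
  set f : ℂ × ℂ → ℂ := fun p =>
    (((r : ℂ) * (s : ℂ)) /
        (((r : ℂ) * (starRingEnd ℂ) p.1 + ζ) - (s : ℂ) * (starRingEnd ℂ) p.2) ^ 2)
      * (((n : ℂ) + 1) * p.1 ^ n) * (((m : ℂ) + 1) * p.2 ^ m) with hf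
  -- lower bound on the denominator
  have hD_lb : ∀ z w : ℂ, ‖z‖ ≤ 1 → ‖w‖ ≤ 1 →
      ε ≤ ‖((r : ℂ) * (starRingEnd ℂ) z + ζ) - (s : ℂ) * (starRingEnd ℂ) w‖ := by
    intro z w hz hw
    set E := ((r : ℂ) * (starRingEnd ℂ) z + ζ) - (s : ℂ) * (starRingEnd ℂ) w with hE
    have hzeq : ζ = (E - (r : ℂ) * (starRingEnd ℂ) z) + (s : ℂ) * (starRingEnd ℂ) w := by
      rw [hE]; ring
    have h1 : ‖ζ‖ ≤ ‖E‖ + ‖(r:ℂ) * (starRingEnd ℂ) z‖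
        + ‖(s:ℂ) * (starRingEnd ℂ) w‖ := by
      calc ‖ζ‖
          = ‖(E - (r : ℂ) * (starRingEnd ℂ) z) + (s : ℂ) * (starRingEnd ℂ) w‖ := by
            rw [← hzeq]
        _ ≤ ‖E - (r : ℂ) * (starRingEnd ℂ) z‖
              + ‖(s:ℂ) * (starRingEnd ℂ) w‖ := norm_add_le _ _
        _ ≤ ‖E‖ + ‖(r:ℂ) * (starRingEnd ℂ) z‖
              + ‖(s:ℂ) * (starRingEnd ℂ) w‖ := by
            have h := norm_sub_le E ((r:ℂ) * (starRingEnd ℂ) z)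
            linarith
    have h2 : ‖(r:ℂ) * (starRingEnd ℂ) z‖ ≤ r := by
      rw [norm_mul, Complex.norm_real, Real.norm_eq_abs, Complex.norm_conj, abs_of_pos hr]
      calc r * ‖z‖ ≤ r * 1 := by
            exact mul_le_mul_of_nonneg_left hz (le_of_lt hr)
        _ = r := mul_one r
    have h3 : ‖(s:ℂ) * (starRingEnd ℂ) w‖ ≤ s := by
      rw [norm_mul, Complex.norm_real, Real.norm_eq_abs, Complex.norm_conj, abs_of_pos hs]
      calc s * ‖w‖ ≤ s * 1 := by
            exact mul_le_mul_of_nonneg_left hw (le_of_lt hs)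
        _ = s := mul_one s
    rw [hε]
    linarith
  -- measurability
  have hmeas : Measurable f := by
    rw [hf]
    apply Measurable.mul
    apply Measurable.mul
    · apply Measurable.div measurable_const
      apply Measurable.pow_const
      exact ((measurable_const.mul (continuous_star.measurable.comp measurable_fst)).add
        measurable_const).sub (measurable_const.mul (continuous_star.measurable.comp measurable_snd))
    · exact measurable_const.mul (measurable_fst.pow_const n)
    · exact measurable_const.mul (measurable_snd.pow_const m)
  have hSmeas : MeasurableSet (unitDisk ×ˢ unitDisk) :=
    measurableSet_unitDisk.prod measurableSet_unitDisk
  have hfinP : IsFiniteMeasure ((μB.prod μB).restrict (unitDisk ×ˢ unitDisk)) := by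
    constructor
    rw [Measure.restrict_apply_univ, Measure.prod_prod, μB_unitDisk, mul_one]
    exact ENNReal.one_lt_top
  set C : ℝ := r * s * ((n:ℝ)+1) * ((m:ℝ)+1) / ε^2 with hC
  have habsn : ‖(n:ℂ) + 1‖ = (n:ℝ) + 1 := by
    rw [show ((n:ℂ) + 1) = ((n+1 : ℕ) : ℂ) by push_cast; ring, Complex.norm_natCast]
    push_cast; ring
  have habsm : ‖(m:ℂ) + 1‖ = (m:ℝ) + 1 := by
    rw [show ((m:ℂ) + 1) = ((m+1 : ℕ) : ℂ) by push_cast; ring, Complex.norm_natCast]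
    push_cast; ring
  have hbound : ∀ p ∈ unitDisk ×ˢ unitDisk, ‖f p‖ ≤ C := by
    rintro ⟨z, w⟩ ⟨hz, hw⟩
    have hz1 : ‖z‖ ≤ 1 := le_of_lt hz
    have hw1 : ‖w‖ ≤ 1 := le_of_lt hw
    have hE := hD_lb z w hz1 hw1
    have hnorm : ‖f (z, w)‖ = (r * s)
          / (‖((r : ℂ) * (starRingEnd ℂ) z + ζ) - (s : ℂ) * (starRingEnd ℂ) w‖) ^ 2
        * (((n:ℝ) + 1) * (‖z‖) ^ n) * (((m:ℝ) + 1) * (‖w‖) ^ m) := by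
      simp only [hf, norm_mul, norm_div, norm_pow, Complex.norm_real, Real.norm_eq_abs,
        habsn, habsm, abs_of_pos hr, abs_of_pos hs]
    calc ‖f (z, w)‖
        = (r * s)
            / (‖((r : ℂ) * (starRingEnd ℂ) z + ζ) - (s : ℂ) * (starRingEnd ℂ) w‖) ^ 2
            * (((n:ℝ) + 1) * (‖z‖) ^ n) * (((m:ℝ) + 1) * (‖w‖) ^ m) := hnorm
      _ ≤ (r * s) / ε ^ 2 * (((n:ℝ) + 1) * 1) * (((m:ℝ) + 1) * 1) := by
          gcongr <;>
            first
              | positivity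
              | exact hE
              | exact pow_le_one₀ (norm_nonneg _) hz1
              | exact pow_le_one₀ (norm_nonneg _) hw1
      _ = C := by rw [hC]; ring
  have hint : IntegrableOn f (unitDisk ×ˢ unitDisk) (μB.prod μB) := by
    apply Integrable.mono' (integrable_const C) hmeas.aestronglyMeasurable
    exact (ae_restrict_iff' hSmeas).mpr (Filter.Eventually.of_forall hbound)
  rw [setIntegral_prod f hint]
  -- inner integral
  have hb_lb : ∀ z ∈ unitDisk,
      ‖(s:ℂ)‖ < ‖(r:ℂ) * (starRingEnd ℂ) z + ζ‖ := by
    intro z hz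
    have hz1 : ‖z‖ ≤ 1 := le_of_lt hz
    have h1 : ‖ζ‖ ≤ ‖(r:ℂ) * (starRingEnd ℂ) z + ζ‖
        + ‖(r:ℂ) * (starRingEnd ℂ) z‖ := by
      calc ‖ζ‖
          = ‖((r:ℂ) * (starRingEnd ℂ) z + ζ) - (r:ℂ) * (starRingEnd ℂ) z‖ := by
            congr 1; ring
        _ ≤ _ := norm_sub_le _ _
    have h2 : ‖(r:ℂ) * (starRingEnd ℂ) z‖ ≤ r := by
      rw [norm_mul, Complex.norm_real, Real.norm_eq_abs, Complex.norm_conj, abs_of_pos hr]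
      calc r * ‖z‖ ≤ r * 1 := mul_le_mul_of_nonneg_left hz1 (le_of_lt hr)
        _ = r := mul_one r
    rw [Complex.norm_real, Real.norm_eq_abs, abs_of_pos hs]
    linarith
  have hinner : ∀ z ∈ unitDisk,
      (∫ w in unitDisk, f (z, w) ∂μB)
        = ((r:ℂ) * (s:ℂ) * (Nat.choose (m+1) 1 : ℂ) * (s:ℂ)^m)
            * (((n:ℂ) + 1) * z ^ n / ((r:ℂ) * (starRingEnd ℂ) z + ζ) ^ (m+1+1)) := by
    intro z hz
    have h1 : (fun w => f (z, w))
        = fun w => ((r:ℂ) * (s:ℂ) * (((n:ℂ) + 1) * z ^ n))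
            * (((m:ℂ) + 1) * w ^ m
              / (((r:ℂ) * (starRingEnd ℂ) z + ζ) - (s:ℂ) * (starRingEnd ℂ) w) ^ (1+1)) := by
      funext w
      rw [hf]
      ring
    rw [h1, integral_const_mul, integralB (hb_lb z hz) 1 m]
    ring
  rw [setIntegral_congr_fun measurableSet_unitDisk (fun z hz => hinner z hz : EqOn _ _ unitDisk)]
  -- outer integral
  have hr_lb : ‖-(r:ℂ)‖ < ‖ζ‖ := by
    rw [norm_neg, Complex.norm_real, Real.norm_eq_abs, abs_of_pos hr]
    linarith
  have h2 : (fun z => ((r:ℂ) * (s:ℂ) * (Nat.choose (m+1) 1 : ℂ) * (s:ℂ)^m)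
        * (((n:ℂ) + 1) * z ^ n / ((r:ℂ) * (starRingEnd ℂ) z + ζ) ^ (m+1+1)))
      = fun z => ((r:ℂ) * (s:ℂ) * (Nat.choose (m+1) 1 : ℂ) * (s:ℂ)^m)
        * (((n:ℂ) + 1) * z ^ n / (ζ - (-(r:ℂ)) * (starRingEnd ℂ) z) ^ ((m+1)+1)) := by
    funext z
    ring_nf
  rw [h2, integral_const_mul, integralB hr_lb (m+1) n, Nat.choose_one_right]
  -- final arithmetic
  have hch : ((n+(m+1)).choose (m+1)) * ((m+1).factorial) * (n.factorial)
      = (n+m+1).factorial := by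
    have h := Nat.choose_mul_factorial_mul_factorial (show m+1 ≤ n+(m+1) by omega)
    simpa [show n+(m+1)-(m+1) = n by omega, show n+(m+1) = n+m+1 by omega] using h
  have hchC : ((n+(m+1)).choose (m+1) : ℂ) * (((m:ℂ)+1) * (m.factorial : ℂ)) * (n.factorial : ℂ)
      = ((n+m+1).factorial : ℂ) := by
    have h := hch
    rw [Nat.factorial_succ] at h
    exact_mod_cast h
  have hzp : ζ ^ (-(n : ℤ) - (m:ℤ) - 2) = (ζ ^ (n+(m+1)+1))⁻¹ := by
    rw [show (-(n : ℤ) - (m:ℤ) - 2) = -((n+(m+1)+1 : ℕ) : ℤ) by push_cast; ring,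
      zpow_neg, zpow_natCast]
  rw [hzp, neg_pow]
  have hnf : ((n.factorial : ℂ)) ≠ 0 := Nat.cast_ne_zero.mpr n.factorial_ne_zero
  have hmf : ((m.factorial : ℂ)) ≠ 0 := Nat.cast_ne_zero.mpr m.factorial_ne_zero
  have hzk : ζ ^ (n+(m+1)+1) ≠ 0 := pow_ne_zero _ hζ0
  field_simp
  have hchC' := hchC
  rw [show n+(m+1) = n+m+1 by omega] at hchC'
  push_cast
  linear_combination ((r:ℂ) * (r:ℂ)^n * (s:ℂ) * (s:ℂ)^m) * hchC'
end
end
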